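/- Let n ≥ 2, ρ = (ρ_1, …, ρ_n) ∈ (0,1)^n with Σ_j ρ_j = 1, λ > 0, and consider the ODE df/dt = 2λ A f on ℝ^n with A = ρ ⊗ (1, …, 1) − I. Let ψ be an entropy generator and μ > 0 be such that for all u = (u_1, …, u_n) ∈ (0,1]^n with Σ_j u_j = 1: Σ_{j=1}^n ψ''(u_j/ρ_j) (1/ρ_j) (ρ_j − u_j)² ≥ (μ/(2λ)) Σ_{j=1}^n ψ'(u_j/ρ_j) (u_j − ρ_j). Then for every initial datum f^I with strictly positive entries and Σ_j f_j^I = 1, the solution f(t) = ρ + (f^I − ρ) e^{−2λ t} satisfies both I_ψ(f(t)|ρ) ≤ e^{−(2λ+μ) t} I_ψ(f^I|ρ) and e_ψ(f(t)|ρ) ≤ e^{−(2λ+μ) t} e_ψ(f^I|ρ) for all t ≥ 0. -/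

import Mathlib

open Real Set Filter

lemma gronwall_aux (a : ℝ) (F F' : ℝ → ℝ)
    (hFcont : ContinuousOn F (Set.Ici 0))
    (hF' : ∀ t ∈ Set.Ioi (0:ℝ), HasDerivAt F (F' t) t)
    (hle : ∀ t ∈ Set.Ioi (0:ℝ), F' t ≤ -a * F t) :
    ∀ t ∈ Set.Ici (0:ℝ), F t ≤ Real.exp (-a * t) * F 0 := by
  intro t ht
  have hexp : ∀ s : ℝ, HasDerivAt (fun u : ℝ => Real.exp (a * u)) (a * Real.exp (a * s)) s := by
    intro s
    simpa [mul_comm, Function.comp_def] using (Real.hasDerivAt_exp (a*s)).comp s ((hasDerivAt_id s).const_mul a)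
  have key : AntitoneOn (fun s => Real.exp (a * s) * F s) (Set.Ici 0) := by
    apply antitoneOn_of_deriv_nonpos (convex_Ici 0)
    · exact (Real.continuous_exp.comp (continuous_const.mul continuous_id)).continuousOn.mul hFcont
    · intro s hs
      rw [interior_Ici] at hs
      exact ((hexp s).mul (hF' s hs)).differentiableAt.differentiableWithinAt
    · intro s hs
      rw [interior_Ici] at hs
      rw [show (fun s => Real.exp (a * s) * F s) = (fun u => Real.exp (a * u)) * F from rfl, ((hexp s).mul (hF' s hs)).deriv]
      have h1 := hle s hs
      have h2 := (Real.exp_pos (a*s)).le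
      nlinarith [mul_le_mul_of_nonneg_left h1 h2]
  have hkey := key Set.self_mem_Ici ht ht
  simp only [mul_zero, Real.exp_zero, one_mul] at hkey
  have h3 : Real.exp (-a * t) * (Real.exp (a * t) * F t) ≤ Real.exp (-a*t) * F 0 :=
    mul_le_mul_of_nonneg_left hkey (Real.exp_pos _).le
  rw [← mul_assoc, ← Real.exp_add, show -a*t + a*t = 0 by ring, Real.exp_zero, one_mul] at h3
  exact h3

theorem stmt_6
    (n : ℕ) (hn : 2 ≤ n)
    (ρ : Fin n → ℝ) (hρ : ∀ j, ρ j ∈ Set.Ioo (0:ℝ) 1) (hρsum : ∑ j, ρ j = 1)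
    (lam μ : ℝ) (hlam : 0 < lam) (hμ : 0 < μ)
    (ψ : ℝ → ℝ)
    (hψcont : ContinuousOn ψ (Ici 0))
    (hψsmooth : ContDiffOn ℝ 2 ψ (Ioi 0))
    (hψ1 : ψ 1 = 0)
    (hψnonneg : ∀ x ∈ Ici (0:ℝ), 0 ≤ ψ x)
    (hψ'' : ∀ x ∈ Ioi (0:ℝ), 0 ≤ deriv (deriv ψ) x)
    (hadm : ∀ u : Fin n → ℝ, (∀ j, u j ∈ Set.Ioc (0:ℝ) 1) → ∑ j, u j = 1 →
      (μ / (2 * lam)) * ∑ j, deriv ψ (u j / ρ j) * (u j - ρ j) ≤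
        ∑ j, deriv (deriv ψ) (u j / ρ j) * (1 / ρ j) * (ρ j - u j) ^ 2)
    (fI : Fin n → ℝ) (hfI : ∀ j, 0 < fI j) (hfIsum : ∑ j, fI j = 1)
    (f : ℝ → Fin n → ℝ)
    (hf : ∀ t : ℝ, ∀ j, f t j = ρ j + (fI j - ρ j) * Real.exp (-(2 * lam) * t)) :
    ∀ t : ℝ, 0 ≤ t →
      (2 * lam * ∑ j, deriv ψ (f t j / ρ j) * (f t j - ρ j) ≤
          Real.exp (-(2 * lam + μ) * t) *
            (2 * lam * ∑ j, deriv ψ (fI j / ρ j) * (fI j - ρ j))) ∧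
      (∑ j, ψ (f t j / ρ j) * ρ j ≤
          Real.exp (-(2 * lam + μ) * t) * ∑ j, ψ (fI j / ρ j) * ρ j) := by
  have hρ0 : ∀ j, 0 < ρ j := fun j => (hρ j).1
  have hρ1 : ∀ j, ρ j < 1 := fun j => (hρ j).2
  have hc : (0:ℝ) < 2 * lam := by positivity
  have hfI1 : ∀ j, fI j ≤ 1 := by
    intro j
    calc fI j ≤ ∑ k, fI k := Finset.single_le_sum (fun k _ => (hfI k).le) (Finset.mem_univ j)
    _ = 1 := hfIsum
  set c : ℝ := 2 * lam with hcdef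
  set φ : Fin n → ℝ → ℝ := fun j t => ρ j + (fI j - ρ j) * Real.exp (-c * t) with hφdef
  have hφmem : ∀ t, 0 ≤ t → ∀ j, φ j t ∈ Set.Ioc (0:ℝ) 1 := by
    intro t ht j
    have he1 : Real.exp (-c*t) ≤ 1 := Real.exp_le_one_iff.2 (by nlinarith)
    have he0 : 0 < Real.exp (-c*t) := Real.exp_pos _
    constructor
    · have := mul_pos he0 (hfI j)
      have h2 := mul_nonneg (by linarith : (0:ℝ) ≤ 1 - Real.exp (-c*t)) (hρ0 j).le
      simp only [hφdef]
      nlinarith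
    · have h2 := mul_nonneg (by linarith : (0:ℝ) ≤ 1 - Real.exp (-c*t)) (by linarith [hρ1 j] : (0:ℝ) ≤ 1 - ρ j)
      simp only [hφdef]
      nlinarith [hfI1 j]
  have hφsum : ∀ t, ∑ j, φ j t = 1 := by
    intro t
    simp only [hφdef]
    rw [Finset.sum_add_distrib, ← Finset.sum_mul, hρsum, Finset.sum_sub_distrib, hρsum, hfIsum]
    ring
  have hφpos : ∀ t, 0 ≤ t → ∀ j, (0:ℝ) < φ j t / ρ j := fun t ht j =>
    div_pos (hφmem t ht j).1 (hρ0 j)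
  -- derivatives of ψ
  have hψd1 : DifferentiableOn ℝ ψ (Set.Ioi 0) := hψsmooth.differentiableOn two_ne_zero
  have hψ'cd : ContDiffOn ℝ 1 (deriv ψ) (Set.Ioi 0) :=
    hψsmooth.deriv_of_isOpen isOpen_Ioi (by norm_num)
  have hψ'd : ∀ x ∈ Set.Ioi (0:ℝ), HasDerivAt ψ (deriv ψ x) x := fun x hx =>
    ((hψd1 x hx).differentiableAt (isOpen_Ioi.mem_nhds hx)).hasDerivAt
  have hψ''d : ∀ x ∈ Set.Ioi (0:ℝ), HasDerivAt (deriv ψ) (deriv (deriv ψ) x) x := fun x hx =>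
    (((hψ'cd.differentiableOn one_ne_zero) x hx).differentiableAt (isOpen_Ioi.mem_nhds hx)).hasDerivAt
  -- derivative of φ
  have hφ' : ∀ j t, HasDerivAt (φ j) (-c * (φ j t - ρ j)) t := by
    intro j t
    have h1 : HasDerivAt (fun s : ℝ => -c * s) (-c) t := by
      simpa using (hasDerivAt_id t).const_mul (-c)
    have h2 : HasDerivAt (fun s => Real.exp (-c*s)) (Real.exp (-c*t) * -c) t :=
      (Real.hasDerivAt_exp (-c*t)).comp t h1
    have h3 := (h2.const_mul (fI j - ρ j)).const_add (ρ j)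
    refine h3.congr_deriv (Eq.symm ?_)
    simp only [hφdef]
    ring
  set I : ℝ → ℝ := fun t => c * ∑ j, deriv ψ (φ j t / ρ j) * (φ j t - ρ j) with hIdef
  set E : ℝ → ℝ := fun t => ∑ j, ψ (φ j t / ρ j) * ρ j with hEdef
  set Q : ℝ → ℝ := fun t => ∑ j, deriv (deriv ψ) (φ j t / ρ j) * (1 / ρ j) * (ρ j - φ j t)^2 with hQdef
  -- continuity
  have hφcont : ∀ j, Continuous (φ j) := by
    intro j
    simp only [hφdef]
    fun_prop
  have hquotcont : ∀ j, ContinuousOn (fun t => φ j t / ρ j) (Set.Ici 0) := fun j =>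
    ((hφcont j).continuousOn.div_const _)
  have hmaps : ∀ j, Set.MapsTo (fun t => φ j t / ρ j) (Set.Ici 0) (Set.Ioi 0) := fun j t ht =>
    hφpos t ht j
  have hψ'cont : ContinuousOn (deriv ψ) (Set.Ioi 0) := hψ'cd.continuousOn
  have hsumcont : ContinuousOn (fun t => ∑ j, deriv ψ (φ j t / ρ j) * (φ j t - ρ j)) (Set.Ici 0) := by
    apply continuousOn_finset_sum
    intro j _
    exact (hψ'cont.comp (hquotcont j) (hmaps j)).mul
      (((hφcont j).continuousOn).sub continuousOn_const)
  have hIcont : ContinuousOn I (Set.Ici 0) := continuousOn_const.mul hsumcont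
  have hEcont : ContinuousOn E (Set.Ici 0) := by
    apply continuousOn_finset_sum
    intro j _
    exact ((hψsmooth.continuousOn).comp (hquotcont j) (hmaps j)).mul continuousOn_const
  -- derivative of I
  have hI' : ∀ t ∈ Set.Ioi (0:ℝ), HasDerivAt I (-c * (c * Q t + I t)) t := by
    intro t ht
    have hsum : HasDerivAt (fun s => ∑ j, deriv ψ (φ j s / ρ j) * (φ j s - ρ j))
        (∑ j, (deriv (deriv ψ) (φ j t / ρ j) * (-c * (φ j t - ρ j) / ρ j) * (φ j t - ρ j)
          + deriv ψ (φ j t / ρ j) * (-c * (φ j t - ρ j)))) t := by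
      apply HasDerivAt.fun_sum
      intro j _
      have hu : φ j t / ρ j ∈ Set.Ioi (0:ℝ) := hφpos t ht.le j
      have hd1 : HasDerivAt (fun s => φ j s / ρ j) (-c * (φ j t - ρ j) / ρ j) t :=
        (hφ' j t).div_const _
      have hd2 : HasDerivAt (fun s => deriv ψ (φ j s / ρ j))
          (deriv (deriv ψ) (φ j t / ρ j) * (-c * (φ j t - ρ j) / ρ j)) t :=
        by have := (hψ''d _ hu).comp t hd1; exact this
      exact hd2.mul ((hφ' j t).sub_const (ρ j))
    have h2 := hsum.const_mul c
    refine h2.congr_deriv (Eq.symm ?_)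
    simp only [hQdef, hIdef, Finset.mul_sum, mul_add, neg_mul, ← Finset.sum_add_distrib,
      ← Finset.sum_neg_distrib]
    apply Finset.sum_congr rfl
    intro j _
    ring
  -- derivative of E
  have hE' : ∀ t ∈ Set.Ioi (0:ℝ), HasDerivAt E (-(I t)) t := by
    intro t ht
    have hsum : HasDerivAt (fun s => ∑ j, ψ (φ j s / ρ j) * ρ j)
        (∑ j, (deriv ψ (φ j t / ρ j) * (-c * (φ j t - ρ j) / ρ j)) * ρ j) t := by
      apply HasDerivAt.fun_sum
      intro j _
      have hu : φ j t / ρ j ∈ Set.Ioi (0:ℝ) := hφpos t ht.le j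
      have hd1 : HasDerivAt (fun s => φ j s / ρ j) (-c * (φ j t - ρ j) / ρ j) t :=
        (hφ' j t).div_const _
      exact ((hψ'd _ hu).comp t hd1).mul_const (ρ j)
    convert hsum using 1
    simp only [hIdef, Finset.mul_sum, ← Finset.sum_neg_distrib]
    apply Finset.sum_congr rfl
    intro j _
    have hr : ρ j ≠ 0 := (hρ0 j).ne'
    field_simp
  -- key admissibility inequality
  have hkey : ∀ t, 0 ≤ t → -c * (c * Q t + I t) ≤ -(c + μ) * I t := by
    intro t ht
    have hadm' := hadm (fun j => φ j t) (fun j => hφmem t ht j) (hφsum t)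
    simp only [hQdef, hIdef] at *
    have hS : (μ / c) * ∑ j, deriv ψ (φ j t / ρ j) * (φ j t - ρ j) ≤ Q t := hadm'
    rw [div_mul_eq_mul_div, div_le_iff₀ hc] at hS
    nlinarith [hS]
  -- Fisher information decay
  have hIdecay : ∀ t ∈ Set.Ici (0:ℝ), I t ≤ Real.exp (-(c + μ) * t) * I 0 := by
    apply gronwall_aux (c + μ) I (fun t => -c * (c * Q t + I t)) hIcont hI'
    intro t ht
    have := hkey t ht.le
    linarith
  -- limits at infinity
  have hexptend : Tendsto (fun t : ℝ => Real.exp (-c * t)) atTop (nhds 0) := by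
    have h1 : Tendsto (fun t : ℝ => -c * t) atTop atBot :=
      tendsto_id.const_mul_atTop_of_neg (by linarith)
    exact Real.tendsto_exp_atBot.comp h1
  have hφtend : ∀ j, Tendsto (fun t => φ j t / ρ j) atTop (nhds 1) := by
    intro j
    have h1 : Tendsto (fun t => φ j t) atTop (nhds (ρ j)) := by
      have := ((hexptend.const_mul (fI j - ρ j)).const_add (ρ j))
      simpa [hφdef, neg_mul] using this
    have h2 := h1.div_const (ρ j)
    rwa [div_self (hρ0 j).ne'] at h2
  have h1mem : (1:ℝ) ∈ Set.Ioi (0:ℝ) := by norm_num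
  have hψ'at1 : ContinuousAt (deriv ψ) 1 :=
    hψ'cont.continuousAt (isOpen_Ioi.mem_nhds h1mem)
  have hψat1 : ContinuousAt ψ 1 :=
    hψsmooth.continuousOn.continuousAt (isOpen_Ioi.mem_nhds h1mem)
  have hItend : Tendsto I atTop (nhds 0) := by
    have h0 : Tendsto (fun t => c * ∑ j, deriv ψ (φ j t / ρ j) * (φ j t - ρ j)) atTop
        (nhds (c * ∑ j : Fin n, deriv ψ 1 * ((ρ j) - ρ j))) := by
      apply Tendsto.const_mul
      apply tendsto_finset_sum
      intro j _
      have ha := hψ'at1.tendsto.comp (hφtend j)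
      have hb : Tendsto (fun t => φ j t - ρ j) atTop (nhds (ρ j - ρ j)) := by
        have h1 : Tendsto (fun t => φ j t) atTop (nhds (ρ j)) := by
          simpa [hφdef, neg_mul] using ((hexptend.const_mul (fI j - ρ j)).const_add (ρ j))
        exact h1.sub_const (ρ j)
      exact ha.mul hb
    simpa using h0
  have hEtend : Tendsto E atTop (nhds 0) := by
    have h0 : Tendsto (fun t => ∑ j, ψ (φ j t / ρ j) * ρ j) atTop
        (nhds (∑ j : Fin n, ψ 1 * ρ j)) := by
      apply tendsto_finset_sum
      intro j _
      exact (hψat1.tendsto.comp (hφtend j)).mul_const (ρ j)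
    simpa [hψ1] using h0
  -- H := I - (c+μ) E is nonneg on [0, ∞)
  set H : ℝ → ℝ := fun t => I t - (c + μ) * E t with hHdef
  have hH' : ∀ t ∈ Set.Ioi (0:ℝ),
      HasDerivAt H (-c * (c * Q t + I t) - (c + μ) * (-(I t))) t := fun t ht =>
    (hI' t ht).sub ((hE' t ht).const_mul (c + μ))
  have hHanti : AntitoneOn H (Set.Ici 0) := by
    apply antitoneOn_of_deriv_nonpos (convex_Ici 0)
    · exact hIcont.sub (hEcont.const_smul (c + μ))
    · intro s hs
      rw [interior_Ici] at hs
      exact (hH' s hs).differentiableAt.differentiableWithinAt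
    · intro s hs
      rw [interior_Ici] at hs
      rw [(hH' s hs).deriv]
      have := hkey s hs.le
      nlinarith [this]
  have hHtend : Tendsto H atTop (nhds 0) := by
    have := hItend.sub (hEtend.const_mul (c + μ))
    simpa using this
  have hHnonneg : ∀ t, 0 ≤ t → 0 ≤ H t := by
    intro t ht
    apply le_of_tendsto hHtend
    filter_upwards [eventually_ge_atTop t] with s hs
    exact hHanti ht (le_trans ht hs) hs
  -- entropy decay
  have hEdecay : ∀ t ∈ Set.Ici (0:ℝ), E t ≤ Real.exp (-(c + μ) * t) * E 0 := by
    apply gronwall_aux (c + μ) E (fun t => -(I t)) hEcont hE'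
    intro t ht
    have := hHnonneg t ht.le
    simp only [hHdef] at this
    linarith
  -- conclusion
  intro t ht
  have hI0 : I 0 = c * ∑ j, deriv ψ (fI j / ρ j) * (fI j - ρ j) := by
    simp only [hIdef, hφdef, mul_zero, Real.exp_zero, mul_one]
    congr 1
    apply Finset.sum_congr rfl
    intro j _
    rw [show ρ j + (fI j - ρ j) = fI j from by ring]
  have hE0 : E 0 = ∑ j, ψ (fI j / ρ j) * ρ j := by
    simp only [hEdef, hφdef, mul_zero, Real.exp_zero, mul_one]
    apply Finset.sum_congr rfl
    intro j _
    rw [show ρ j + (fI j - ρ j) = fI j from by ring]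
  have hIL : (2 * lam * ∑ j, deriv ψ (f t j / ρ j) * (f t j - ρ j)) = I t := by
    simp only [hIdef, hφdef, hf, hcdef]
  have hEL : (∑ j, ψ (f t j / ρ j) * ρ j) = E t := by
    simp only [hEdef, hφdef, hf]
  refine ⟨?_, ?_⟩
  · rw [hIL, show -(2 * lam + μ) = -(c + μ) by rw [hcdef], ← hI0]
    exact hIdecay t ht
  · rw [hEL, show -(2 * lam + μ) = -(c + μ) by rw [hcdef], ← hE0]
    exact hEdecay t ht
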